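/- Let G be a finite abelian group, ε : G × G → {1,-1} a bicharacter, p ∈ G, z ∈ G with 2z = 0. Suppose (χ, μ, ξ, ν, a) satisfies: χ, μ characters of G; a : G → ℂˣ with a(0) = 1; ν² = μ(p+z); ξ² = χ(p); μ(g)² = χ(g)² for all g; μ(p) = χ(p+z); χ(g) = a(g)² for all g; a(h+2g) = a(h)·ε(g,h)·ε(g,h-p)·χ(g) for all g,h; a(g)·a(g-p)·ε(p+z, g-2p)·ξ = μ(g) for all g; and a(g)·a(-g) = ε(-g, g-p)·ε(-g, g) for all g. Let ζ : G → ℂˣ be a character and k ∈ G with 2k = 0. Define χ' = ζ²·χ, μ' = ζ²·μ, ξ' = ζ(p)·χ(k)·ξ, ν' = ζ(p+z)·μ(k)·ν, and a'(g) = ζ(g)·ε(k, g-p)·ε(k, p)·a(g). Then (χ', μ', ξ', ν', a') satisfies the same system of equations. -/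

import Mathlib

/-- the transformation of extension data by a character `ζ` and a
2-torsion element `k` (Theorem 3.7) preserves the extension-data equations
(n1)–(n9) (excluding the one involving the structure constants `A`). -/
theorem stmt_12 {G : Type*} [AddCommGroup G] [Fintype G]
    (ε : G → G → ℂˣ)
    (hεval : ∀ g h, ε g h = 1 ∨ ε g h = -1)
    (hεl : ∀ g g' h, ε (g + g') h = ε g h * ε g' h)
    (hεr : ∀ g h h', ε g (h + h') = ε g h * ε g h')
    (p z : G) (hz : z + z = 0)
    (χ μ : G → ℂˣ) (ξ ν : ℂˣ) (a : G → ℂˣ)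
    (hχ : ∀ x y, χ (x + y) = χ x * χ y)
    (hμ : ∀ x y, μ (x + y) = μ x * μ y)
    (ha0 : a 0 = 1)
    (hn1 : ν ^ 2 = μ (p + z))
    (hn2 : ξ ^ 2 = χ p)
    (hn3 : ∀ g, (μ g) ^ 2 = (χ g) ^ 2)
    (hn4 : μ p = χ (p + z))
    (hn6 : ∀ g, χ g = (a g) ^ 2)
    (hn7 : ∀ g h, a (h + (g + g)) = a h * ε g h * ε g (h - p) * χ g)
    (hn8 : ∀ g, a g * a (g - p) * ε (p + z) (g - p - p) * ξ = μ g)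
    (hn9 : ∀ g, a g * a (-g) = ε (-g) (g - p) * ε (-g) g)
    (ζ : G → ℂˣ) (hζ : ∀ x y, ζ (x + y) = ζ x * ζ y)
    (k : G) (hk : k + k = 0)
    (χ' μ' a' : G → ℂˣ) (ξ' ν' : ℂˣ)
    (hχ' : ∀ g, χ' g = ζ g ^ 2 * χ g)
    (hμ' : ∀ g, μ' g = ζ g ^ 2 * μ g)
    (hξ' : ξ' = ζ p * χ k * ξ)
    (hν' : ν' = ζ (p + z) * μ k * ν)
    (ha' : ∀ g, a' g = ζ g * ε k (g - p) * ε k p * a g) :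
    (∀ x y, χ' (x + y) = χ' x * χ' y) ∧
    (∀ x y, μ' (x + y) = μ' x * μ' y) ∧
    a' 0 = 1 ∧
    ν' ^ 2 = μ' (p + z) ∧
    ξ' ^ 2 = χ' p ∧
    (∀ g, (μ' g) ^ 2 = (χ' g) ^ 2) ∧
    μ' p = χ' (p + z) ∧
    (∀ g, χ' g = (a' g) ^ 2) ∧
    (∀ g h, a' (h + (g + g)) = a' h * ε g h * ε g (h - p) * χ' g) ∧
    (∀ g, a' g * a' (g - p) * ε (p + z) (g - p - p) * ξ' = μ' g) ∧
    (∀ g, a' g * a' (-g) = ε (-g) (g - p) * ε (-g) g) := by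
  -- basic ε facts
  have hsq : ∀ g h, ε g h * ε g h = 1 := by
    intro g h; rcases hεval g h with h1 | h1 <;> rw [h1] <;> norm_num
  have hεr2 : ∀ g h, ε g (h + h) = 1 := fun g h => by rw [hεr, hsq]
  have hεr0 : ∀ g, ε g 0 = 1 := fun g => by
    have := hεr2 g 0; rwa [add_zero] at this
  have hεrneg : ∀ g h, ε g (-h) = ε g h := by
    intro g h
    have h1 : ε g h * ε g (-h) = 1 := by rw [← hεr, add_neg_cancel, hεr0]
    exact mul_left_cancel (h1.trans (hsq g h).symm)
  -- character facts
  have hζ0 : ζ 0 = 1 := by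
    have := hζ 0 0; rw [add_zero] at this; exact (right_eq_mul.mp this)
  have hμ0 : μ 0 = 1 := by
    have := hμ 0 0; rw [add_zero] at this; exact (right_eq_mul.mp this)
  have hχ0 : χ 0 = 1 := by
    have := hχ 0 0; rw [add_zero] at this; exact (right_eq_mul.mp this)
  have hζneg : ∀ g, ζ (-g) * ζ g = 1 := by
    intro g; rw [← hζ, neg_add_cancel, hζ0]
  have hμk : μ k * μ k = 1 := by rw [← hμ, hk, hμ0]
  have hχk2 : χ k * χ k = 1 := by rw [← hχ, hk, hχ0]
  have hζpz : ζ (p + z) * ζ (p + z) = ζ p * ζ p := by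
    rw [← hζ, ← hζ, show p + z + (p + z) = p + p + (z + z) by abel, hz, add_zero]
  have hχk : χ k = ε k p := by
    have h7 := hn7 k 0
    rw [hk, add_zero, ha0, zero_sub, hεrneg, hεr0] at h7
    rw [one_mul, one_mul] at h7
    exact mul_left_cancel (h7.symm.trans (hsq k p).symm)
  refine ⟨?_, ?_, ?_, ?_, ?_, ?_, ?_, ?_, ?_, ?_, ?_⟩
  · intro x y
    rw [hχ' (x + y), hχ' x, hχ' y, hχ x y, hζ x y]
    rw [Units.ext_iff]; push_cast; ring
  · intro x y
    rw [hμ' (x + y), hμ' x, hμ' y, hμ x y, hζ x y]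
    rw [Units.ext_iff]; push_cast; ring
  · rw [ha' 0, ha0, hζ0, zero_sub, hεrneg, one_mul, mul_one, hsq]
  · rw [hν', hμ' (p + z)]
    have H1 : ((ν : ℂ)) ^ 2 = μ (p + z) := by exact_mod_cast hn1
    have H2 : ((μ k : ℂ)) * μ k = 1 := by rw [← Units.val_mul, hμk, Units.val_one]
    rw [Units.ext_iff]; push_cast
    linear_combination ((ζ (p + z) : ℂ))^2 * (ν : ℂ)^2 * H2 + ((ζ (p + z) : ℂ))^2 * H1
  · rw [hξ', hχ' p]
    have H1 : ((ξ : ℂ)) ^ 2 = χ p := by exact_mod_cast hn2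
    have H2 : ((χ k : ℂ)) * χ k = 1 := by rw [← Units.val_mul, hχk2, Units.val_one]
    rw [Units.ext_iff]; push_cast
    linear_combination ((ζ p : ℂ))^2 * (ξ : ℂ)^2 * H2 + ((ζ p : ℂ))^2 * H1
  · intro g
    rw [hμ' g, hχ' g]
    have H1 : ((μ g : ℂ)) ^ 2 = (χ g : ℂ) ^ 2 := by exact_mod_cast hn3 g
    rw [Units.ext_iff]; push_cast
    linear_combination ((ζ g : ℂ))^4 * H1
  · rw [hμ' p, hχ' (p + z), hn4]
    have H1 : ((ζ (p + z) : ℂ)) * ζ (p + z) = (ζ p : ℂ) * ζ p := by exact_mod_cast hζpz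
    rw [Units.ext_iff]; push_cast
    linear_combination ((χ (p + z) : ℂ)) * H1.symm
  · intro g
    rw [hχ' g, ha' g, hn6 g]
    have H1 : ((ε k (g - p) : ℂ)) * ε k (g - p) = 1 := by rw [← Units.val_mul, hsq, Units.val_one]
    have H2 : ((ε k p : ℂ)) * ε k p = 1 := by rw [← Units.val_mul, hsq, Units.val_one]
    rw [Units.ext_iff]; push_cast
    linear_combination (-((ζ g : ℂ))^2 * (ε k p : ℂ)^2 * (a g : ℂ)^2) * H1
      - ((ζ g : ℂ))^2 * (a g : ℂ)^2 * H2
  · intro g h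
    rw [ha' (h + (g + g)), ha' h, hχ' g, hn7 g h, hζ h, hζ g]
    have harg : ε k (h + (g + g) - p) = ε k (h - p) := by
      rw [show h + (g + g) - p = (h - p) + (g + g) by abel, hεr, hεr2, mul_one]
    rw [harg]
    rw [Units.ext_iff]; push_cast; ring
  · intro g
    rw [ha' g, ha' (g - p), hμ' g, hξ']
    have harg : ε k (g - p - p) = ε k (g - p) * ε k p := by
      rw [show g - p - p = (g - p) + (-p) by abel, hεr, hεrneg]
    rw [harg, hχk]
    have Hμg : ((μ g : ℂ)) = a g * a (g - p) * ε (p + z) (g - p - p) * ξ := by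
      exact_mod_cast (hn8 g).symm
    have Hζ : ((ζ g : ℂ)) * ζ (g - p) * ζ p = (ζ g : ℂ) * ζ g := by
      have : ζ g * ζ (g - p) * ζ p = ζ g * ζ g := by
        rw [mul_assoc, ← hζ, sub_add_cancel]
      exact_mod_cast this
    have H1 : ((ε k (g - p) : ℂ)) * ε k (g - p) = 1 := by rw [← Units.val_mul, hsq, Units.val_one]
    have H2 : ((ε k p : ℂ)) * ε k p = 1 := by rw [← Units.val_mul, hsq, Units.val_one]
    rw [Units.ext_iff]; push_cast
    rw [Hμg]
    set X : ℂ := (a g : ℂ) * (a (g - p) : ℂ) * (ε (p + z) (g - p - p) : ℂ) * (ξ : ℂ) with hX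
    set e1 : ℂ := (ε k (g - p) : ℂ) with he1
    set e2 : ℂ := (ε k p : ℂ) with he2
    linear_combination (X * e1 ^ 2 * e2 ^ 4) * Hζ
      + (X * (ζ g : ℂ) ^ 2 * e2 ^ 4) * H1
      + (X * (ζ g : ℂ) ^ 2 * (e2 ^ 2 + 1)) * H2
  · intro g
    rw [ha' g, ha' (-g)]
    have harg : ε k (-g - p) = ε k (g - p) := by
      rw [show -g - p = -(g - p) + (-p) + (-p) by abel, hεr, hεr, hεrneg, hεrneg,
        mul_assoc, hsq, mul_one]
    rw [harg]
    have H1 : ((ε k (g - p) : ℂ)) * ε k (g - p) = 1 := by rw [← Units.val_mul, hsq, Units.val_one]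
    have H2 : ((ε k p : ℂ)) * ε k p = 1 := by rw [← Units.val_mul, hsq, Units.val_one]
    have H3 : ((ζ (-g) : ℂ)) * ζ g = 1 := by rw [← Units.val_mul, hζneg, Units.val_one]
    have H9 : ((a g : ℂ)) * a (-g) = (ε (-g) (g - p) : ℂ) * ε (-g) g := by
      exact_mod_cast hn9 g
    rw [Units.ext_iff]; push_cast
    linear_combination ((ζ g : ℂ) * (ζ (-g) : ℂ) * (ε k (g - p) : ℂ) ^ 2 * (ε k p : ℂ) ^ 2) * H9
      + ((ε (-g) (g - p) : ℂ)) * (ε (-g) g : ℂ) *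
        ((ε k (g - p) : ℂ) * (ε k (g - p) : ℂ) * (ε k p : ℂ) * (ε k p : ℂ) * H3
          + (ε k p : ℂ) * (ε k p : ℂ) * H1 + H2)
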